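/- Multilevel Andreief identity for m = 2: ∫∫ det(ψ_a(x_b)) det(w(y_a, x_b)) det(φ_a(y_b)) dμ^N(x) dν^N(y) = (N!)² det(∫∫ ψ_a(x) w(y,x) φ_b(y) dμ(x) dν(y)), where all determinants are of N×N matrices. -/

import Mathlib

open MeasureTheory MeasureTheory.Measure


private lemma andreief_sign_sq {R : Type*} [CommRing R] {N : ℕ} (ρ : Equiv.Perm (Fin N)) :
    ((Equiv.Perm.sign ρ : ℤ) : R) * ((Equiv.Perm.sign ρ : ℤ) : R) = 1 := by
  rcases Int.units_eq_one_or (Equiv.Perm.sign ρ) with h | h <;> simp [h]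

private lemma andreief_comb {R : Type*} [CommRing R] {N : ℕ} (K : Matrix (Fin N) (Fin N) R) :
    ∑ σ : Equiv.Perm (Fin N), ∑ π : Equiv.Perm (Fin N), ∑ τ : Equiv.Perm (Fin N),
      (((Equiv.Perm.sign σ : ℤ) : R) * ((Equiv.Perm.sign π : ℤ) : R)
          * ((Equiv.Perm.sign τ : ℤ) : R)) * ∏ b, K (σ b) (τ (π b))
      = ((N.factorial : R)) ^ 2 * K.det := by
  have hτ : ∀ σ π : Equiv.Perm (Fin N),
      (∑ τ : Equiv.Perm (Fin N),
        (((Equiv.Perm.sign σ : ℤ) : R) * ((Equiv.Perm.sign π : ℤ) : R)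
          * ((Equiv.Perm.sign τ : ℤ) : R)) * ∏ b, K (σ b) (τ (π b)))
      = ((Equiv.Perm.sign σ : ℤ) : R)
          * ∑ ρ : Equiv.Perm (Fin N),
              ((Equiv.Perm.sign ρ : ℤ) : R) * ∏ b, K (σ b) (ρ b) := by
    intro σ π
    rw [Finset.mul_sum]
    refine Fintype.sum_equiv (Equiv.mulRight π) _ _ fun τ => ?_
    have h1 : ((Equiv.Perm.sign (τ * π) : ℤ) : R)
        = ((Equiv.Perm.sign τ : ℤ) : R) * ((Equiv.Perm.sign π : ℤ) : R) := by
      rw [map_mul]; push_cast; ring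
    simp only [Equiv.coe_mulRight, Equiv.Perm.mul_apply, h1]
    ring
  have hD : ∀ σ : Equiv.Perm (Fin N),
      (∑ ρ : Equiv.Perm (Fin N), ((Equiv.Perm.sign ρ : ℤ) : R) * ∏ b, K (σ b) (ρ b))
        = ((Equiv.Perm.sign σ : ℤ) : R) * K.det := by
    intro σ
    have hdet : K.det = ∑ η : Equiv.Perm (Fin N),
        ((Equiv.Perm.sign η : ℤ) : R) * ∏ a, K a (η a) := by
      rw [← Matrix.det_transpose K, Matrix.det_apply']
      simp [Matrix.transpose_apply]
    rw [hdet, Finset.mul_sum]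
    refine Fintype.sum_equiv (Equiv.mulRight σ⁻¹) _ _ fun ρ => ?_
    have hp : (∏ b, K (σ b) (ρ b)) = ∏ a, K a (ρ (σ⁻¹ a)) := by
      calc (∏ b, K (σ b) (ρ b)) = ∏ b, K (σ b) (ρ (σ⁻¹ (σ b))) := by
            refine Finset.prod_congr rfl fun b _ => ?_; simp
        _ = ∏ a, K a (ρ (σ⁻¹ a)) := Equiv.prod_comp σ (fun a => K a (ρ (σ⁻¹ a)))
    have h1 : ((Equiv.Perm.sign (ρ * σ⁻¹) : ℤ) : R)
        = ((Equiv.Perm.sign ρ : ℤ) : R) * ((Equiv.Perm.sign σ : ℤ) : R) := by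
      rw [map_mul, Equiv.Perm.sign_inv]; push_cast; ring
    simp only [Equiv.coe_mulRight, Equiv.Perm.mul_apply, h1, hp]
    linear_combination (-(((Equiv.Perm.sign ρ : ℤ) : R) * ∏ a, K a (ρ (σ⁻¹ a))))
      * andreief_sign_sq (R := R) σ
  calc
    (∑ σ : Equiv.Perm (Fin N), ∑ π : Equiv.Perm (Fin N), ∑ τ : Equiv.Perm (Fin N),
      (((Equiv.Perm.sign σ : ℤ) : R) * ((Equiv.Perm.sign π : ℤ) : R)
          * ((Equiv.Perm.sign τ : ℤ) : R)) * ∏ b, K (σ b) (τ (π b)))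
      = ∑ σ : Equiv.Perm (Fin N), ∑ _π : Equiv.Perm (Fin N),
          ((Equiv.Perm.sign σ : ℤ) : R) * (((Equiv.Perm.sign σ : ℤ) : R) * K.det) := by
        refine Finset.sum_congr rfl fun σ _ => Finset.sum_congr rfl fun π _ => ?_
        rw [hτ σ π, hD σ]
    _ = ∑ _σ : Equiv.Perm (Fin N), (N.factorial : R) * K.det := by
        refine Finset.sum_congr rfl fun σ _ => ?_
        rw [Finset.sum_const, Finset.card_univ, Fintype.card_perm, Fintype.card_fin,
          nsmul_eq_mul]
        linear_combination ((N.factorial : R) * K.det) * andreief_sign_sq (R := R) σ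
    _ = ((N.factorial : R)) ^ 2 * K.det := by
        rw [Finset.sum_const, Finset.card_univ, Fintype.card_perm, Fintype.card_fin,
          nsmul_eq_mul]
        ring

open MeasureTheory MeasureTheory.Measure

private lemma andreief_prod_integral {Γ₁ Γ₂ : Type*} [MeasurableSpace Γ₁] [MeasurableSpace Γ₂]
    (μ : Measure Γ₁) (ν : Measure Γ₂) [SigmaFinite μ] [SigmaFinite ν] {N : ℕ}
    (f : Fin N → Γ₁ × Γ₂ → ℂ) (hf : ∀ b, Integrable (f b) (μ.prod ν))
    (π : Equiv.Perm (Fin N)) :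
    Integrable (fun p : (Fin N → Γ₁) × (Fin N → Γ₂) => ∏ b, f b (p.1 b, p.2 (π b)))
        ((Measure.pi fun _ => μ).prod (Measure.pi fun _ => ν)) ∧
      (∫ p : (Fin N → Γ₁) × (Fin N → Γ₂), (∏ b, f b (p.1 b, p.2 (π b)))
          ∂((Measure.pi fun _ => μ).prod (Measure.pi fun _ => ν)))
        = ∏ b, ∫ q, f b q ∂(μ.prod ν) := by
  classical
  set E : ((Fin N → Γ₁) × (Fin N → Γ₂)) ≃ᵐ (Fin N → Γ₁ × Γ₂) :=
    (MeasurableEquiv.prodCongr (MeasurableEquiv.refl (Fin N → Γ₁))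
        (MeasurableEquiv.piCongrLeft (fun _ => Γ₂) π.symm)).trans
      (MeasurableEquiv.arrowProdEquivProdArrow Γ₁ Γ₂ (Fin N)).symm with hEdef
  have hE : MeasurePreserving E
      ((Measure.pi fun _ => μ).prod (Measure.pi fun _ => ν)) (Measure.pi fun _ => μ.prod ν) := by
    have h1 : MeasurePreserving (MeasurableEquiv.arrowProdEquivProdArrow Γ₁ Γ₂ (Fin N)).symm
        ((Measure.pi fun _ => μ).prod (Measure.pi fun _ => ν))
        (Measure.pi fun _ => μ.prod ν) :=
      MeasurePreserving.symm _
        (measurePreserving_arrowProdEquivProdArrow Γ₁ Γ₂ (Fin N) (fun _ => μ) (fun _ => ν))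
    have h2 : MeasurePreserving
        (MeasurableEquiv.prodCongr (MeasurableEquiv.refl (Fin N → Γ₁))
          (MeasurableEquiv.piCongrLeft (fun _ => Γ₂) π.symm))
        ((Measure.pi fun _ => μ).prod (Measure.pi fun _ => ν))
        ((Measure.pi fun _ => μ).prod (Measure.pi fun _ => ν)) :=
      (MeasurePreserving.id _).prod (measurePreserving_piCongrLeft (fun _ => ν) π.symm)
    exact h1.comp h2
  have hEapp : ∀ (p : (Fin N → Γ₁) × (Fin N → Γ₂)) (b : Fin N), E p b = (p.1 b, p.2 (π b)) := by
    intro p b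
    have h2 : (MeasurableEquiv.piCongrLeft (fun _ => Γ₂) π.symm) p.2 b = p.2 (π b) := by
      have := MeasurableEquiv.piCongrLeft_apply_apply (β := fun _ => Γ₂) π.symm p.2 (π b)
      simpa using this
    simp [hEdef, MeasurableEquiv.trans_apply, MeasurableEquiv.prodCongr,
      MeasurableEquiv.arrowProdEquivProdArrow, Equiv.arrowProdEquivProdArrow, h2]
  have key : (fun p : (Fin N → Γ₁) × (Fin N → Γ₂) => ∏ b, f b (p.1 b, p.2 (π b)))
      = (fun z : Fin N → Γ₁ × Γ₂ => ∏ b, f b (z b)) ∘ E := by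
    funext p
    simp only [Function.comp_apply]
    exact Finset.prod_congr rfl fun b _ => by rw [hEapp p b]
  letI : MeasureSpace (Γ₁ × Γ₂) := { volume := μ.prod ν }
  haveI : SigmaFinite (volume : Measure (Γ₁ × Γ₂)) := inferInstanceAs (SigmaFinite (μ.prod ν))
  have hG : Integrable (fun z : Fin N → Γ₁ × Γ₂ => ∏ b, f b (z b))
      (Measure.pi fun _ => μ.prod ν) := by
    have := Integrable.fintype_prod (f := f) hf
    simpa [volume_pi] using this
  constructor
  · rw [key]
    exact (hE.integrable_comp_emb E.measurableEmbedding).mpr hG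
  · have h4 : (∫ z, (∏ b, f b (z b)) ∂(Measure.pi fun _ => μ.prod ν))
        = ∏ b, ∫ q, f b q ∂(μ.prod ν) := by
      have := MeasureTheory.integral_fintype_prod_eq_prod (ι := Fin N) (E := fun _ => Γ₁ × Γ₂) f
        (μ := fun _ => μ.prod ν)
      simpa [volume_pi] using this
    have h3 : (∫ p : (Fin N → Γ₁) × (Fin N → Γ₂),
          (fun z : Fin N → Γ₁ × Γ₂ => ∏ b, f b (z b)) (E p)
          ∂((Measure.pi fun _ => μ).prod (Measure.pi fun _ => ν)))
        = ∫ z, (∏ b, f b (z b)) ∂(Measure.pi fun _ => μ.prod ν) :=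
      hE.integral_comp' (fun z : Fin N → Γ₁ × Γ₂ => ∏ b, f b (z b))
    calc (∫ p : (Fin N → Γ₁) × (Fin N → Γ₂), (∏ b, f b (p.1 b, p.2 (π b)))
          ∂((Measure.pi fun _ => μ).prod (Measure.pi fun _ => ν)))
        = ∫ p : (Fin N → Γ₁) × (Fin N → Γ₂),
            (fun z : Fin N → Γ₁ × Γ₂ => ∏ b, f b (z b)) (E p)
            ∂((Measure.pi fun _ => μ).prod (Measure.pi fun _ => ν)) := by
          exact congrArg (fun g => ∫ p, g p ∂_) key
      _ = ∏ b, ∫ q, f b q ∂(μ.prod ν) := h3.trans h4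

/-- Multilevel Andreief identity for `m = 2`:
`∫∫ det(ψ_a(x_b)) det(w(y_a,x_b)) det(φ_a(y_b)) dμ^N(x) dν^N(y)
  = (N!)² det(∫∫ ψ_a(x) w(y,x) φ_b(y) dμ(x) dν(y))`. -/
theorem andreief_two_level {Γ₁ Γ₂ : Type*} [MeasurableSpace Γ₁] [MeasurableSpace Γ₂]
    (μ : Measure Γ₁) (ν : Measure Γ₂) [SigmaFinite μ] [SigmaFinite ν] {N : ℕ}
    (ψ : Fin N → Γ₁ → ℂ) (φ : Fin N → Γ₂ → ℂ) (w : Γ₂ → Γ₁ → ℂ)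
    (hψ : ∀ a, Measurable (ψ a)) (hφ : ∀ a, Measurable (φ a))
    (hw : Measurable (Function.uncurry w))
    (hInt : ∀ a b, Integrable (fun p : Γ₁ × Γ₂ => ψ a p.1 * w p.2 p.1 * φ b p.2)
      (μ.prod ν))
    (hIntN : Integrable
      (fun p : (Fin N → Γ₁) × (Fin N → Γ₂) =>
        (Matrix.of fun a b => ψ a (p.1 b)).det
          * (Matrix.of fun a b => w (p.2 a) (p.1 b)).det
          * (Matrix.of fun a b => φ a (p.2 b)).det)
      ((Measure.pi fun _ => μ).prod (Measure.pi fun _ => ν))) :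
    (∫ x : Fin N → Γ₁, ∫ y : Fin N → Γ₂,
        (Matrix.of fun a b => ψ a (x b)).det
          * (Matrix.of fun a b => w (y a) (x b)).det
          * (Matrix.of fun a b => φ a (y b)).det
        ∂(Measure.pi fun _ => ν) ∂(Measure.pi fun _ => μ))
      = ((N.factorial : ℂ))^2
          * (Matrix.of fun a b =>
              ∫ x, ∫ y, ψ a x * w y x * φ b y ∂ν ∂μ).det := by
  classical
  set K : Matrix (Fin N) (Fin N) ℂ :=
    Matrix.of fun a b => ∫ x, ∫ y, ψ a x * w y x * φ b y ∂ν ∂μ with hK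
  have hKentry : ∀ a b, (∫ q, ψ a q.1 * w q.2 q.1 * φ b q.2 ∂(μ.prod ν)) = K a b :=
    fun a b => MeasureTheory.integral_prod _ (hInt a b)
  set P := Equiv.Perm (Fin N)
  set T : P × P × P → ((Fin N → Γ₁) × (Fin N → Γ₂)) → ℂ :=
    fun z p =>
      (((Equiv.Perm.sign z.1 : ℤ) : ℂ) * ((Equiv.Perm.sign z.2.1 : ℤ) : ℂ)
          * ((Equiv.Perm.sign z.2.2 : ℤ) : ℂ))
        * ∏ b, (ψ (z.1 b) (p.1 b) * w (p.2 (z.2.1 b)) (p.1 b)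
            * φ (z.2.2 (z.2.1 b)) (p.2 (z.2.1 b))) with hT
  have hexp : ∀ p : (Fin N → Γ₁) × (Fin N → Γ₂),
      (Matrix.of fun a b => ψ a (p.1 b)).det
          * (Matrix.of fun a b => w (p.2 a) (p.1 b)).det
          * (Matrix.of fun a b => φ a (p.2 b)).det
        = ∑ z : P × P × P, T z p := by
    intro p
    rw [Fintype.sum_prod_type]
    simp only [Fintype.sum_prod_type]
    rw [Matrix.det_apply', Matrix.det_apply', Matrix.det_apply']
    rw [Finset.sum_mul_sum, Finset.sum_mul]
    refine Finset.sum_congr rfl fun σ _ => ?_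
    rw [Finset.sum_mul_sum]
    refine Finset.sum_congr rfl fun π _ => Finset.sum_congr rfl fun τ _ => ?_
    simp only [hT, Matrix.of_apply]
    rw [← Equiv.prod_comp π (fun a => φ (τ a) (p.2 a))]
    rw [Finset.prod_mul_distrib, Finset.prod_mul_distrib]
    ring
  have hTint : ∀ z : P × P × P,
      Integrable (T z) ((Measure.pi fun _ => μ).prod (Measure.pi fun _ => ν)) := by
    intro z
    have := (andreief_prod_integral μ ν
      (fun b q => ψ (z.1 b) q.1 * w q.2 q.1 * φ (z.2.2 (z.2.1 b)) q.2)
      (fun b => hInt (z.1 b) (z.2.2 (z.2.1 b))) z.2.1).1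
    exact this.const_mul _
  have hTval : ∀ z : P × P × P,
      (∫ p, T z p ∂((Measure.pi fun _ => μ).prod (Measure.pi fun _ => ν)))
        = (((Equiv.Perm.sign z.1 : ℤ) : ℂ) * ((Equiv.Perm.sign z.2.1 : ℤ) : ℂ)
              * ((Equiv.Perm.sign z.2.2 : ℤ) : ℂ))
            * ∏ b, K (z.1 b) (z.2.2 (z.2.1 b)) := by
    intro z
    have h := (andreief_prod_integral μ ν
      (fun b q => ψ (z.1 b) q.1 * w q.2 q.1 * φ (z.2.2 (z.2.1 b)) q.2)
      (fun b => hInt (z.1 b) (z.2.2 (z.2.1 b))) z.2.1).2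
    simp only [hT]
    rw [MeasureTheory.integral_const_mul]
    rw [h]
    congr 1
    exact Finset.prod_congr rfl fun b _ => hKentry (z.1 b) (z.2.2 (z.2.1 b))
  have h0 : (∫ x : Fin N → Γ₁, ∫ y : Fin N → Γ₂,
        (Matrix.of fun a b => ψ a (x b)).det
          * (Matrix.of fun a b => w (y a) (x b)).det
          * (Matrix.of fun a b => φ a (y b)).det
        ∂(Measure.pi fun _ => ν) ∂(Measure.pi fun _ => μ))
      = ∫ p : (Fin N → Γ₁) × (Fin N → Γ₂),
          (Matrix.of fun a b => ψ a (p.1 b)).det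
            * (Matrix.of fun a b => w (p.2 a) (p.1 b)).det
            * (Matrix.of fun a b => φ a (p.2 b)).det
          ∂((Measure.pi fun _ => μ).prod (Measure.pi fun _ => ν)) :=
    (MeasureTheory.integral_prod _ hIntN).symm
  rw [h0]
  calc (∫ p : (Fin N → Γ₁) × (Fin N → Γ₂),
        (Matrix.of fun a b => ψ a (p.1 b)).det
          * (Matrix.of fun a b => w (p.2 a) (p.1 b)).det
          * (Matrix.of fun a b => φ a (p.2 b)).det
        ∂((Measure.pi fun _ => μ).prod (Measure.pi fun _ => ν)))
      = ∫ p, (∑ z : P × P × P, T z p)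
          ∂((Measure.pi fun _ => μ).prod (Measure.pi fun _ => ν)) :=
        integral_congr_ae (Filter.Eventually.of_forall hexp)
    _ = ∑ z : P × P × P, ∫ p, T z p
          ∂((Measure.pi fun _ => μ).prod (Measure.pi fun _ => ν)) :=
        integral_finset_sum _ fun z _ => hTint z
    _ = ∑ z : P × P × P,
          (((Equiv.Perm.sign z.1 : ℤ) : ℂ) * ((Equiv.Perm.sign z.2.1 : ℤ) : ℂ)
              * ((Equiv.Perm.sign z.2.2 : ℤ) : ℂ))
            * ∏ b, K (z.1 b) (z.2.2 (z.2.1 b)) :=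
        Finset.sum_congr rfl fun z _ => hTval z
    _ = ((N.factorial : ℂ))^2 * K.det := by
        rw [Fintype.sum_prod_type]
        simp only [Fintype.sum_prod_type]
        exact andreief_comb K
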